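/- Abstract version of the associativity derivation: Let G be a family of maps indexed by chains in a poset, such that the 'one-pair compatibility' identity and the 'pairs compatibility' identity hold (as purely algebraic identities on products of sets with nonnegative real parameters). Then the induced binary operation #_λ satisfies (x #_{λ₁} y) #_{λ₂} z = x #_{λ₁} (y #_{λ₂} z) for positive parameters in the common range of validity. -/
import Mathlib


/-!
STATEMENT 12: Abstract associativity derivation.  For each chain in a poset Ω assign a
set M_I (a product of the sets M(r_i,r_{i+1})) and a map
G_I : M_I × [0,ε_I)^{|I|} → M̄(head I, tail I) satisfying the one-pair compatibility (1),
the pairs compatibility (2), and such that G on length-0 chains is the inclusion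
incl : M(p,q) → M̄(p,q).  Then the induced binary operation x #_λ y := G_{{p,r,q}}(x,y,λ)
is associative for positive parameters in the common range of validity.  The stratum
condition supplies, for positive λ, elements a, b of the open strata with
incl a = γ₁ #_{l₁} γ₂ and incl b = γ₂ #_{l₂} γ₃; associativity says
(a) #_{l₂} γ₃ = γ₁ #_{l₁} (b).
-/

theorem abstract_gluing_associative
    (Ω : Type) [PartialOrder Ω]
    -- the open moduli sets `M(p,q)` and their compactifications `M̄(p,q)`
    (M Mb : Ω → Ω → Type)
    -- inclusion of the open stratum: the gluing map of a length-0 chain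
    (incl : ∀ p q : Ω, M p q → Mb p q)
    -- the face embeddings `M̄(p,r) × M̄(r,q) ↪ M̄(p,q)`
    (ι : ∀ p r q : Ω, Mb p r × Mb r q → Mb p q)
    -- gluing maps for chains of length 1 and 2, defined on the products M_I
    (G2 : ∀ p r q : Ω, M p r × M r q → ℝ → Mb p q)
    (G3 : ∀ p r s q : Ω, M p r × M r s × M s q → ℝ × ℝ → Mb p q)
    (ε : ℝ) (hε : 0 < ε)
    -- pairs compatibility (2), where the gluing map of {s,q} is the inclusion
    (h2a : ∀ (p r s q : Ω) (x : M p r) (y : M r s) (z : M s q) (l : ℝ),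
      0 ≤ l → l < ε →
      G3 p r s q (x, y, z) (l, 0) = ι p s q (G2 p r s (x, y) l, incl s q z))
    -- pairs compatibility (2), where the gluing map of {p,r} is the inclusion
    (h2b : ∀ (p r s q : Ω) (x : M p r) (y : M r s) (z : M s q) (l : ℝ),
      0 ≤ l → l < ε →
      G3 p r s q (x, y, z) (0, l) = ι p r q (incl p r x, G2 r s q (y, z) l))
    -- one-pair compatibility (1), with I₁ = {p,r,s,q} and I₂ = {p,s,q}
    (h1a : ∀ (p r s q : Ω) (w : M p r × M r s × M s q) (l₁ l₂ : ℝ)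
      (a : M p s) (b : M s q), 0 ≤ l₁ → l₁ < ε → 0 ≤ l₂ → l₂ < ε →
      G3 p r s q w (l₁, 0) = ι p s q (incl p s a, incl s q b) →
      G3 p r s q w (l₁, l₂) = G2 p s q (a, b) l₂)
    -- one-pair compatibility (1), with I₁ = {p,r,s,q} and I₂ = {p,r,q}
    (h1b : ∀ (p r s q : Ω) (w : M p r × M r s × M s q) (l₁ l₂ : ℝ)
      (a : M p r) (b : M r q), 0 ≤ l₁ → l₁ < ε → 0 ≤ l₂ → l₂ < ε →
      G3 p r s q w (0, l₂) = ι p r q (incl p r a, incl r q b) →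
      G3 p r s q w (l₁, l₂) = G2 p r q (a, b) l₁)
    -- three consecutive elements of the strata
    (p₀ p₁ p₂ p₃ : Ω) (h01 : p₁ < p₀) (h12 : p₂ < p₁) (h23 : p₃ < p₂)
    (γ₁ : M p₀ p₁) (γ₂ : M p₁ p₂) (γ₃ : M p₂ p₃)
    (l₁ l₂ : ℝ) (hl₁ : l₁ ∈ Set.Ioo 0 ε) (hl₂ : l₂ ∈ Set.Ioo 0 ε)
    -- by the stratum condition, for positive parameters the glued objects lie in the
    -- open strata: a = γ₁ #_{l₁} γ₂ and b = γ₂ #_{l₂} γ₃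
    (a : M p₀ p₂) (ha : incl p₀ p₂ a = G2 p₀ p₁ p₂ (γ₁, γ₂) l₁)
    (b : M p₁ p₃) (hb : incl p₁ p₃ b = G2 p₁ p₂ p₃ (γ₂, γ₃) l₂) :
    -- (γ₁ #_{l₁} γ₂) #_{l₂} γ₃ = γ₁ #_{l₁} (γ₂ #_{l₂} γ₃)
    G2 p₀ p₂ p₃ (a, γ₃) l₂ = G2 p₀ p₁ p₃ (γ₁, b) l₁ := by
  obtain ⟨hl₁0, hl₁ε⟩ := hl₁
  obtain ⟨hl₂0, hl₂ε⟩ := hl₂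
  have e1 : G3 p₀ p₁ p₂ p₃ (γ₁, γ₂, γ₃) (l₁, l₂) = G2 p₀ p₂ p₃ (a, γ₃) l₂ := by
    apply h1a _ _ _ _ _ _ _ _ _ hl₁0.le hl₁ε hl₂0.le hl₂ε
    rw [h2a _ _ _ _ _ _ _ _ hl₁0.le hl₁ε, ha]
  have e2 : G3 p₀ p₁ p₂ p₃ (γ₁, γ₂, γ₃) (l₁, l₂) = G2 p₀ p₁ p₃ (γ₁, b) l₁ := by
    apply h1b _ _ _ _ _ _ _ _ _ hl₁0.le hl₁ε hl₂0.le hl₂ε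
    rw [h2b _ _ _ _ _ _ _ _ hl₂0.le hl₂ε, hb]
  rw [← e1, e2]
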